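/- Assume r, B, C > 0, D ≥ 0 and rB - D > 0. Set h*_n = (rBn - D)/C for n ≥ 1 and δ = C·h*_1 / 2 (any δ with 0 < δ < C·h*_1 works). Then for every n ≥ 1, every h ≥ h*_1, and every t ≥ 0, the solution φ_n(h,t) of y' = y(rBn - D - Cy), y(0) = h, satisfies |φ_n(h,t) - h*_n| ≤ |h - h*_n|·e^{-δ t}. -/

import Mathlib

noncomputable def phi (r B C D : ℝ) (n : ℕ) (h t : ℝ) : ℝ :=
  h * Real.exp (t * (r * B * n - D)) /
    (1 + h * C / (r * B * n - D) * (Real.exp (t * (r * B * n - D)) - 1))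

/-- The equilibrium `h*_n = (rBn - D)/C`. -/
noncomputable def hstar (r B C D : ℝ) (n : ℕ) : ℝ := (r * B * n - D) / C

theorem stmt_4 (r B C D : ℝ) (hr : 0 < r) (hB : 0 < B) (hC : 0 < C) (hD : 0 ≤ D)
    (hgrow : 0 < r * B - D) :
    ∀ n : ℕ, 1 ≤ n → ∀ h : ℝ, hstar r B C D 1 ≤ h → ∀ t : ℝ, 0 ≤ t →
      |phi r B C D n h t - hstar r B C D n| ≤
        |h - hstar r B C D n| * Real.exp (-(C * hstar r B C D 1 / 2) * t) := by
  intro n hn h hh t ht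
  set b : ℝ := r * B - D with hbdef
  set a : ℝ := r * B * (n : ℝ) - D with hadef
  have hba : b ≤ a := by
    have h1 : (1 : ℝ) ≤ (n : ℝ) := by exact_mod_cast hn
    have : r * B * 1 ≤ r * B * (n : ℝ) :=
      mul_le_mul_of_nonneg_left h1 (by positivity)
    simp only [hbdef, hadef]; nlinarith
  have hapos : 0 < a := lt_of_lt_of_le hgrow hba
  have hE1 : 1 ≤ Real.exp (t * a) := Real.one_le_exp (by positivity)
  have hs1 : hstar r B C D 1 = b / C := by simp [hstar, hbdef]
  have hhC : b ≤ h * C := by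
    rw [hs1, div_le_iff₀ hC] at hh; linarith
  set E : ℝ := Real.exp (t * a) with hEdef
  set Q : ℝ := 1 + h * C / a * (E - 1) with hQdef
  set θ : ℝ := b / a with hθdef
  have hθ0 : 0 < θ := div_pos hgrow hapos
  have hθ1 : θ ≤ 1 := (div_le_one hapos).2 hba
  -- convexity: exp(θ * (t*a)) ≤ 1 + θ * (E - 1)
  have hconv : Real.exp (θ * (t * a)) ≤ 1 + θ * (E - 1) := by
    have h' : Real.exp (θ * (t * a)) ≤ 1 - θ + θ * E := by
      have := convexOn_exp.2 (Set.mem_univ (0 : ℝ)) (Set.mem_univ (t * a))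
        (by linarith : (0:ℝ) ≤ 1 - θ) hθ0.le (by ring)
      simpa [Real.exp_zero, hEdef, mul_comm, smul_eq_mul] using this
    linarith
  have hθta : θ * (t * a) = b * t := by
    rw [hθdef]; field_simp
  have hQge : Real.exp (b / 2 * t) ≤ Q := by
    have h1 : Real.exp (b / 2 * t) ≤ Real.exp (b * t) := by
      apply Real.exp_le_exp.2; nlinarith
    have h2 : 1 + θ * (E - 1) ≤ Q := by
      have hθle : θ ≤ h * C / a := div_le_div_of_nonneg_right hhC hapos.le
      have hE0 : 0 ≤ E - 1 := by linarith
      have := mul_le_mul_of_nonneg_right hθle hE0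
      simp only [hQdef]; linarith
    calc Real.exp (b / 2 * t) ≤ Real.exp (b * t) := h1
      _ = Real.exp (θ * (t * a)) := by rw [hθta]
      _ ≤ 1 + θ * (E - 1) := hconv
      _ ≤ Q := h2
  have hQpos : 0 < Q := lt_of_lt_of_le (Real.exp_pos _) hQge
  have hQne : Q ≠ 0 := ne_of_gt hQpos
  have ha' : a ≠ 0 := ne_of_gt hapos
  have hC' : C ≠ 0 := ne_of_gt hC
  have hQmul : a * Q = a + h * C * (E - 1) := by
    rw [hQdef]; field_simp
  have key : phi r B C D n h t - hstar r B C D n = (h - hstar r B C D n) / Q := by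
    have hphi : phi r B C D n h t = h * E / Q := by
      simp only [phi, ← hadef, ← hEdef, ← hQdef]
    have hstarn : hstar r B C D n = a / C := by simp [hstar, hadef]
    rw [hphi, hstarn]
    rw [div_sub_div _ _ hQne hC', show h - a / C = (h * C - a) / C by field_simp,
      div_div, div_eq_div_iff (mul_ne_zero hQne hC') (mul_ne_zero hC' hQne)]
    linear_combination (-(C * Q)) * hQmul
  rw [key, abs_div, abs_of_pos hQpos]
  have hδ : C * hstar r B C D 1 / 2 = b / 2 := by
    rw [hs1]; field_simp
  rw [hδ, show -(b / 2) * t = -(b / 2 * t) by ring, Real.exp_neg, ← div_eq_mul_inv]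
  exact div_le_div_of_nonneg_left (abs_nonneg _) (Real.exp_pos _) hQge
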